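/- Let K ⊆ ℝⁿ be compact and u ∈ USC(K) bounded below, with oscillation osc_K u = sup_K u − inf_K u. Fix r > 0, set δ = √(2r·osc_K u), and suppose v ∈ K satisfies d(v, ∂K) > δ. Then there exists a point x ∈ K with |x − v| ≤ δ such that the quadratic φ(y) = c + |y − v|²/(2r), with c = sup_{z∈K}(u(z) − |z−v|²/(2r)), satisfies u ≤ φ on K with equality at x; i.e. the set of contact points of the upper contact quadratic of radius r and vertex v is nonempty, compact, and contained in the closed ball of radius δ around v. -/

import Mathlib

open scoped RealInnerProductSpace

/-- An upper semicontinuous real function attains its maximum on a nonempty compact set. -/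
lemma usc_exists_max {X : Type*} [TopologicalSpace X] {K : Set X} (hK : IsCompact K)
    (hne : K.Nonempty) {g : X → ℝ} (hg : UpperSemicontinuousOn g K) :
    ∃ x ∈ K, ∀ y ∈ K, g y ≤ g x := by
  by_contra h
  push_neg at h
  -- for each x ∈ K choose y x ∈ K with g x < g (y x)
  choose y hyK hylt using h
  -- for each x ∈ K, choose an open neighborhood on which g < g (y x)
  have hU : ∀ x (hx : x ∈ K), ∃ U ∈ nhds x, ∀ z ∈ U ∩ K, g z < g (y x hx) := by
    intro x hx
    have := hg x hx (g (y x hx)) (hylt x hx)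
    rw [eventually_nhdsWithin_iff] at this
    rcases eventually_nhds_iff.1 this with ⟨U, hU1, hU2, hU3⟩
    exact ⟨U, hU2.mem_nhds hU3, fun z hz => hU1 z hz.1 hz.2⟩
  choose U hUmem hUlt using hU
  -- extract a finite subcover
  obtain ⟨t, hcov⟩ := hK.elim_nhds_subcover' (fun x hx => U x hx) hUmem
  have htne : t.Nonempty := by
    rcases hne with ⟨x0, hx0⟩
    have := hcov hx0
    simp only [Set.mem_iUnion] at this
    rcases this with ⟨i, hit, _⟩
    exact ⟨i, hit⟩
  -- pick the element of t whose associated value g (y _) is maximal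
  obtain ⟨x0, hx0t, hx0max⟩ :=
    t.exists_max_image (fun x => g (y x.1 x.2)) htne
  -- the point y x0 lies in some U x1 with x1 ∈ t, giving a contradiction
  have hy0K : (y x0.1 x0.2) ∈ K := hyK _ _
  have := hcov hy0K
  simp only [Set.mem_iUnion] at this
  rcases this with ⟨x1, hx1t, hx1U⟩
  have h1 : g (y x0.1 x0.2) < g (y x1.1 x1.2) :=
    hUlt x1.1 x1.2 _ ⟨hx1U, hy0K⟩
  have h2 : g (y x1.1 x1.2) ≤ g (y x0.1 x0.2) := hx0max x1 hx1t
  linarith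

theorem stmt_17 {n : ℕ} {K : Set (EuclideanSpace ℝ (Fin n))} (hK : IsCompact K)
    {u : EuclideanSpace ℝ (Fin n) → ℝ} (husc : UpperSemicontinuousOn u K)
    (hbb : BddBelow (u '' K)) {r : ℝ} (hr : 0 < r)
    {v : EuclideanSpace ℝ (Fin n)} (hv : v ∈ K)
    (hd : Real.sqrt (2 * r * (sSup (u '' K) - sInf (u '' K))) <
      Metric.infDist v (frontier K)) :
    ({x ∈ K | u x =
        sSup ((fun z => u z - ‖z - v‖ ^ 2 / (2 * r)) '' K) +
          ‖x - v‖ ^ 2 / (2 * r)}).Nonempty ∧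
    IsCompact {x ∈ K | u x =
        sSup ((fun z => u z - ‖z - v‖ ^ 2 / (2 * r)) '' K) +
          ‖x - v‖ ^ 2 / (2 * r)} ∧
    {x ∈ K | u x =
        sSup ((fun z => u z - ‖z - v‖ ^ 2 / (2 * r)) '' K) +
          ‖x - v‖ ^ 2 / (2 * r)} ⊆
      Metric.closedBall v (Real.sqrt (2 * r * (sSup (u '' K) - sInf (u '' K)))) := by
  have hne : K.Nonempty := ⟨v, hv⟩
  set g : EuclideanSpace ℝ (Fin n) → ℝ := fun z => u z - ‖z - v‖ ^ 2 / (2 * r) with hg_def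
  have hcont : Continuous fun z : EuclideanSpace ℝ (Fin n) => -(‖z - v‖ ^ 2 / (2 * r)) := by
    fun_prop
  have hgusc : UpperSemicontinuousOn g K := by
    have : UpperSemicontinuousOn (fun z : EuclideanSpace ℝ (Fin n) =>
        -(‖z - v‖ ^ 2 / (2 * r))) K := hcont.continuousOn.upperSemicontinuousOn
    have := husc.add this
    exact this
  obtain ⟨x, hxK, hxmax⟩ := usc_exists_max hK hne hgusc
  have hgbdd : BddAbove (g '' K) := ⟨g x, by rintro _ ⟨z, hz, rfl⟩; exact hxmax z hz⟩
  set c : ℝ := sSup (g '' K) with hc_def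
  have hc_eq : c = g x :=
    le_antisymm (csSup_le (hne.image g) (by rintro _ ⟨z, hz, rfl⟩; exact hxmax z hz))
      (le_csSup hgbdd ⟨x, hxK, rfl⟩)
  -- bound on u
  obtain ⟨m, hmK, hmmax⟩ := usc_exists_max hK hne husc
  have hubdd : BddAbove (u '' K) := ⟨u m, by rintro _ ⟨z, hz, rfl⟩; exact hmmax z hz⟩
  set S := {x ∈ K | u x = c + ‖x - v‖ ^ 2 / (2 * r)} with hS_def
  have hgc : ∀ z ∈ K, g z ≤ c := fun z hz => le_csSup hgbdd ⟨z, hz, rfl⟩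
  have hr2 : (0:ℝ) < 2 * r := by linarith
  -- membership characterization
  have hmemS : ∀ z, z ∈ S ↔ z ∈ K ∧ g z = c := by
    intro z
    constructor
    · rintro ⟨hz, he⟩
      refine ⟨hz, ?_⟩
      simp only [hg_def]
      linarith
    · rintro ⟨hz, he⟩
      refine ⟨hz, ?_⟩
      simp only [hg_def] at he
      linarith
  refine ⟨⟨x, hxK, ?_⟩, ?_, ?_⟩
  · rw [hc_eq]
    show u x = (u x - ‖x - v‖ ^ 2 / (2 * r)) + ‖x - v‖ ^ 2 / (2 * r)
    ring
  · -- compactness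
    refine hK.of_isClosed_subset ?_ (Set.sep_subset _ _)
    rw [← closure_subset_iff_isClosed]
    intro z hzc
    have hzK : z ∈ K := hK.isClosed.closure_subset_iff.2 (fun y hy => hy.1) hzc
    have hle : g z ≤ c := hgc z hzK
    refine (hmemS z).2 ⟨hzK, le_antisymm hle ?_⟩
    by_contra hlt
    push_neg at hlt
    have hev : ∀ᶠ w in nhdsWithin z K, g w < c := hgusc z hzK c hlt
    have hSsubK : ({x | x ∈ K ∧ u x = c + ‖x - v‖ ^ 2 / (2 * r)} : Set _) ⊆ K :=
      fun y hy => hy.1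
    have hev' : ∀ᶠ w in nhdsWithin z {x | x ∈ K ∧ u x = c + ‖x - v‖ ^ 2 / (2 * r)},
        g w < c := hev.filter_mono (nhdsWithin_mono z hSsubK)
    have hmem : ∀ᶠ w in nhdsWithin z {x | x ∈ K ∧ u x = c + ‖x - v‖ ^ 2 / (2 * r)},
        w ∈ {x | x ∈ K ∧ u x = c + ‖x - v‖ ^ 2 / (2 * r)} := self_mem_nhdsWithin
    have hnb : (nhdsWithin z {x | x ∈ K ∧ u x = c + ‖x - v‖ ^ 2 / (2 * r)}).NeBot :=
      mem_closure_iff_nhdsWithin_neBot.1 hzc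
    obtain ⟨w, hw1, hw2⟩ := (hev'.and hmem).exists
    have : g w = c := ((hmemS w).1 hw2).2
    linarith
  · -- contained in closed ball
    intro z hz
    rcases (hmemS z).1 hz with ⟨hzK, hgz⟩
    have hgv : g v ≤ c := hgc v hv
    have hgv' : g v = u v := by simp [hg_def]
    have h1 : ‖z - v‖ ^ 2 / (2 * r) = u z - g z := by
      show ‖z - v‖ ^ 2 / (2 * r) = u z - (u z - ‖z - v‖ ^ 2 / (2 * r))
      ring
    have h2 : u z ≤ sSup (u '' K) := le_csSup hubdd ⟨z, hzK, rfl⟩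
    have h3 : sInf (u '' K) ≤ u v := csInf_le hbb ⟨v, hv, rfl⟩
    have hq : ‖z - v‖ ^ 2 ≤ 2 * r * (sSup (u '' K) - sInf (u '' K)) := by
      have h4 : ‖z - v‖ ^ 2 / (2 * r) ≤ sSup (u '' K) - sInf (u '' K) := by
        clear_value g c
        linarith
      calc ‖z - v‖ ^ 2 = 2 * r * (‖z - v‖ ^ 2 / (2 * r)) := by field_simp
        _ ≤ 2 * r * (sSup (u '' K) - sInf (u '' K)) :=
            mul_le_mul_of_nonneg_left h4 (le_of_lt hr2)
    rw [Metric.mem_closedBall]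
    have hd0 : dist z v = ‖z - v‖ := by rw [dist_eq_norm]
    rw [hd0]
    have h5 : u v ≤ sSup (u '' K) := le_csSup hubdd ⟨v, hv, rfl⟩
    rw [Real.le_sqrt (norm_nonneg _) (mul_nonneg (by linarith) (by linarith))]
    exact hq
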